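/- arXiv:2202.08881 — 4 statements merged into one kernel-verified Lean document; each statement's English description precedes it below -/
import Mathlib

section
/- Let 𝔤 be a Lie algebra over ℝ, let Ω : 𝔤 × 𝔤 → 𝔤 be an alternating ℝ-bilinear map, and let 𝔪 and 𝔨 be Lie subalgebras of 𝔤. Define ∂Ω(x,y,z) := [x, Ω(y,z)] − [y, Ω(x,z)] + [z, Ω(x,y)] − Ω([x,y], z) + Ω([x,z], y) − Ω([y,z], x). Assume: (i) Ω(z, x) = 0 for every z ∈ 𝔨 and every x ∈ 𝔤; (ii) [z, Ω(x,y)] = Ω([z,x], y) + Ω(x, [z,y]) for every z ∈ 𝔨 and all x, y ∈ 𝔤; (iii) ∂Ω(x,y,z) = 0 for all x, y, z ∈ 𝔪; (iv) Ω(Ω(x,y), z) − Ω(Ω(x,z), y) + Ω(Ω(y,z), x) = 0 for all x, y, z in the submodule 𝔧 := 𝔪 + 𝔨; (v) [x,y] ∈ 𝔧 and Ω(x,y) ∈ 𝔧 for all x, y ∈ 𝔧. Then 𝔧 equipped with the bracket [x,y]_Ω := [x,y] − Ω(x,y) is a Lie algebra. -/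
/-- A binary operation `b` on a real module is a Lie bracket if it is bilinear,
alternating, and satisfies the Jacobi identity; i.e. it equips the module with
the structure of a Lie algebra over `ℝ`. -/
structure IsLieBracket (L : Type*) [AddCommGroup L] [Module ℝ L] (b : L → L → L) : Prop where
  add_left : ∀ x y z : L, b (x + y) z = b x z + b y z
  smul_left : ∀ (c : ℝ) (x z : L), b (c • x) z = c • b x z
  add_right : ∀ x y z : L, b x (y + z) = b x y + b x z
  smul_right : ∀ (c : ℝ) (x z : L), b x (c • z) = c • b x z
  alternating : ∀ x : L, b x x = 0
  jacobi : ∀ x y z : L, b (b x y) z + b (b y z) x + b (b z x) y = 0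

/-- Abstraction of the Theorem of Section 3: if `𝔪` and `𝔨` are Lie subalgebras of `𝔤`,
`Ω` is an alternating bilinear map annihilated and infinitesimally stabilized by `𝔨`,
satisfying `∂Ω = 0` on `𝔪` and the Kruglikov–The property on `𝔧 := 𝔪 + 𝔨`, and `𝔧`
is closed under both the bracket and `Ω`, then `𝔧` with the deformed bracket
`[x,y]_Ω = [x,y] - Ω(x,y)` is a Lie algebra. -/
theorem sum_subalgebras_deformed_bracket_isLieBracket
    (𝔤 : Type*) [LieRing 𝔤] [LieAlgebra ℝ 𝔤]
    (Ω : 𝔤 →ₗ[ℝ] 𝔤 →ₗ[ℝ] 𝔤)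
    (halt : ∀ x : 𝔤, Ω x x = 0)
    (𝔪 𝔨 : LieSubalgebra ℝ 𝔤)
    (h1 : ∀ z ∈ 𝔨, ∀ x : 𝔤, Ω z x = 0)
    (h2 : ∀ z ∈ 𝔨, ∀ x y : 𝔤, ⁅z, Ω x y⁆ = Ω ⁅z, x⁆ y + Ω x ⁅z, y⁆)
    (h3 : ∀ x ∈ 𝔪, ∀ y ∈ 𝔪, ∀ z ∈ 𝔪,
      ⁅x, Ω y z⁆ - ⁅y, Ω x z⁆ + ⁅z, Ω x y⁆
        - Ω ⁅x, y⁆ z + Ω ⁅x, z⁆ y - Ω ⁅y, z⁆ x = 0)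
    (h4 : ∀ x ∈ (𝔪.toSubmodule ⊔ 𝔨.toSubmodule : Submodule ℝ 𝔤),
          ∀ y ∈ (𝔪.toSubmodule ⊔ 𝔨.toSubmodule : Submodule ℝ 𝔤),
          ∀ z ∈ (𝔪.toSubmodule ⊔ 𝔨.toSubmodule : Submodule ℝ 𝔤),
      Ω (Ω x y) z - Ω (Ω x z) y + Ω (Ω y z) x = 0)
    (h5br : ∀ x ∈ (𝔪.toSubmodule ⊔ 𝔨.toSubmodule : Submodule ℝ 𝔤),
            ∀ y ∈ (𝔪.toSubmodule ⊔ 𝔨.toSubmodule : Submodule ℝ 𝔤),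
      ⁅x, y⁆ ∈ (𝔪.toSubmodule ⊔ 𝔨.toSubmodule : Submodule ℝ 𝔤))
    (h5Om : ∀ x ∈ (𝔪.toSubmodule ⊔ 𝔨.toSubmodule : Submodule ℝ 𝔤),
            ∀ y ∈ (𝔪.toSubmodule ⊔ 𝔨.toSubmodule : Submodule ℝ 𝔤),
      Ω x y ∈ (𝔪.toSubmodule ⊔ 𝔨.toSubmodule : Submodule ℝ 𝔤)) :
    IsLieBracket ↥(𝔪.toSubmodule ⊔ 𝔨.toSubmodule : Submodule ℝ 𝔤)
      (fun x y =>
        (⟨⁅(x : 𝔤), (y : 𝔤)⁆ - Ω (x : 𝔤) (y : 𝔤),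
          Submodule.sub_mem _ (h5br x x.2 y y.2) (h5Om x x.2 y y.2)⟩ :
            ↥(𝔪.toSubmodule ⊔ 𝔨.toSubmodule : Submodule ℝ 𝔤))) := by
  
  classical
  -- skew symmetry of Ω
  have hskew : ∀ a b : 𝔤, Ω a b = -Ω b a := by
    intro a b
    have h := halt (a + b)
    simp only [map_add, LinearMap.add_apply, halt, zero_add, add_zero] at h
    exact eq_neg_of_add_eq_zero_right h
  have lsk : ∀ a b : 𝔤, ⁅a, b⁆ = -⁅b, a⁆ := fun a b => (lie_skew a b).symm
  -- the ∂Ω expression, in the orientation convenient for the final computation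
  set D : 𝔤 → 𝔤 → 𝔤 → 𝔤 := fun x y z =>
    -⁅Ω y z, x⁆ - ⁅Ω z x, y⁆ - ⁅Ω x y, z⁆ - Ω ⁅x, y⁆ z - Ω ⁅z, x⁆ y - Ω ⁅y, z⁆ x with hD
  have hDeq : ∀ x y z : 𝔤, D x y z =
      ⁅x, Ω y z⁆ - ⁅y, Ω x z⁆ + ⁅z, Ω x y⁆ - Ω ⁅x, y⁆ z + Ω ⁅x, z⁆ y - Ω ⁅y, z⁆ x := by
    intro x y z
    rw [hD]
    simp only
    rw [hskew z x, lsk z x, lsk (Ω y z) x, lsk (Ω x y) z]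
    simp only [map_neg, lie_neg, neg_lie, LinearMap.neg_apply, neg_neg]
    rw [lsk (Ω x z) y]
    abel
  -- vanishing of D when all three arguments are in 𝔪
  have keyM : ∀ x ∈ 𝔪, ∀ y ∈ 𝔪, ∀ z ∈ 𝔪, ∀ _ : True, D x y z = 0 := by
    intro x hx y hy z hz _
    rw [hDeq]
    exact h3 x hx y hy z hz
  -- vanishing of D when the first argument is in 𝔨
  have keyKx : ∀ x ∈ 𝔨, ∀ y z : 𝔤, D x y z = 0 := by
    intro x hx y z
    have e : ∀ w : 𝔤, Ω x w = 0 := h1 x hx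
    have e' : ∀ w : 𝔤, Ω w x = 0 := fun w => by rw [hskew, e, neg_zero]
    rw [hDeq, h2 x hx y z]
    simp only [e, e', lie_zero, zero_lie]
    rw [hskew y ⁅x, z⁆]
    abel
  -- vanishing of D when the second argument is in 𝔨
  have keyKy : ∀ y ∈ 𝔨, ∀ x z : 𝔤, D x y z = 0 := by
    intro y hy x z
    have e : ∀ w : 𝔤, Ω y w = 0 := h1 y hy
    have e' : ∀ w : 𝔤, Ω w y = 0 := fun w => by rw [hskew, e, neg_zero]
    rw [hDeq, h2 y hy x z]
    simp only [e, e', lie_zero, zero_lie]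
    rw [lsk y x, map_neg, hskew x ⁅y, z⁆]
    simp only [LinearMap.neg_apply]
    abel
  -- vanishing of D when the third argument is in 𝔨
  have keyKz : ∀ z ∈ 𝔨, ∀ x y : 𝔤, D x y z = 0 := by
    intro z hz x y
    have e : ∀ w : 𝔤, Ω z w = 0 := h1 z hz
    have e' : ∀ w : 𝔤, Ω w z = 0 := fun w => by rw [hskew, e, neg_zero]
    rw [hDeq, h2 z hz x y]
    simp only [e, e', lie_zero, zero_lie]
    rw [lsk x z, map_neg, lsk y z, map_neg, hskew x ⁅z, y⁆]
    simp only [LinearMap.neg_apply]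
    abel
  -- additivity of D in each slot
  have Dadd1 : ∀ a b y z : 𝔤, D (a + b) y z = D a y z + D b y z := by
    intro a b y z
    simp only [hD, map_add, LinearMap.add_apply, add_lie, lie_add]
    abel
  have Dadd2 : ∀ x a b z : 𝔤, D x (a + b) z = D x a z + D x b z := by
    intro x a b z
    simp only [hD, map_add, LinearMap.add_apply, add_lie, lie_add]
    abel
  have Dadd3 : ∀ x y a b : 𝔤, D x y (a + b) = D x y a + D x y b := by
    intro x y a b
    simp only [hD, map_add, LinearMap.add_apply, add_lie, lie_add]
    abel
  -- vanishing of D on 𝔧 = 𝔪 + 𝔨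
  have keyJ : ∀ x ∈ (𝔪.toSubmodule ⊔ 𝔨.toSubmodule : Submodule ℝ 𝔤),
      ∀ y ∈ (𝔪.toSubmodule ⊔ 𝔨.toSubmodule : Submodule ℝ 𝔤),
      ∀ z ∈ (𝔪.toSubmodule ⊔ 𝔨.toSubmodule : Submodule ℝ 𝔤), D x y z = 0 := by
    intro x hx y hy z hz
    obtain ⟨ax, hax, bx, hbx, rfl⟩ := Submodule.mem_sup.mp hx
    obtain ⟨ay, hay, by', hby, rfl⟩ := Submodule.mem_sup.mp hy
    obtain ⟨az, haz, bz, hbz, rfl⟩ := Submodule.mem_sup.mp hz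
    rw [LieSubalgebra.mem_toSubmodule] at hax hay haz hbx hby hbz
    simp only [Dadd1, Dadd2, Dadd3, keyM ax hax ay hay az haz trivial,
      keyKx bx hbx, keyKy by' hby, keyKz bz hbz, add_zero, zero_add]
  constructor
  · intro x y z
    apply Subtype.ext
    simp only [Submodule.coe_add, map_add, LinearMap.add_apply, add_lie]
    abel
  · intro c x z
    apply Subtype.ext
    simp only [SetLike.val_smul, map_smul, LinearMap.smul_apply, smul_lie, smul_sub]
  · intro x y z
    apply Subtype.ext
    simp only [Submodule.coe_add, map_add, LinearMap.add_apply, lie_add]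
    abel
  · intro c x z
    apply Subtype.ext
    simp only [SetLike.val_smul, map_smul, LinearMap.smul_apply, lie_smul, smul_sub]
  · intro x
    apply Subtype.ext
    simp [halt]
  · intro x y z
    apply Subtype.ext
    simp only [Submodule.coe_add, ZeroMemClass.coe_zero]
    set a : 𝔤 := (x : 𝔤) with ha
    set b : 𝔤 := (y : 𝔤) with hb
    set c : 𝔤 := (z : 𝔤) with hc
    have hD0 := keyJ a x.2 b y.2 c z.2
    rw [hD] at hD0
    simp only at hD0
    have h4' := h4 a x.2 b y.2 c z.2
    have h4'' : Ω (Ω a b) c + Ω (Ω c a) b + Ω (Ω b c) a = 0 := by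
      rw [hskew a c] at h4'
      simp only [map_neg, LinearMap.neg_apply] at h4'
      calc Ω (Ω a b) c + Ω (Ω c a) b + Ω (Ω b c) a
          = Ω (Ω a b) c - -Ω (Ω c a) b + Ω (Ω b c) a := by abel
        _ = 0 := h4'
    have jac : (⁅⁅a, b⁆, c⁆ + ⁅⁅b, c⁆, a⁆ + ⁅⁅c, a⁆, b⁆ : 𝔤) = 0 := by
      calc (⁅⁅a, b⁆, c⁆ + ⁅⁅b, c⁆, a⁆ + ⁅⁅c, a⁆, b⁆ : 𝔤)
          = -(⁅c, ⁅a, b⁆⁆ + ⁅a, ⁅b, c⁆⁆ + ⁅b, ⁅c, a⁆⁆) := by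
            rw [lsk c ⁅a, b⁆, lsk a ⁅b, c⁆, lsk b ⁅c, a⁆]; abel
        _ = 0 := by rw [lie_jacobi]; simp
    calc (⁅⁅a, b⁆ - Ω a b, c⁆ - Ω (⁅a, b⁆ - Ω a b) c)
          + (⁅⁅b, c⁆ - Ω b c, a⁆ - Ω (⁅b, c⁆ - Ω b c) a)
          + (⁅⁅c, a⁆ - Ω c a, b⁆ - Ω (⁅c, a⁆ - Ω c a) b)
        = (⁅⁅a, b⁆, c⁆ + ⁅⁅b, c⁆, a⁆ + ⁅⁅c, a⁆, b⁆)
          + (-⁅Ω b c, a⁆ - ⁅Ω c a, b⁆ - ⁅Ω a b, c⁆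
             - Ω ⁅a, b⁆ c - Ω ⁅c, a⁆ b - Ω ⁅b, c⁆ a)
          + (Ω (Ω a b) c + Ω (Ω c a) b + Ω (Ω b c) a) := by
          simp only [map_sub, LinearMap.sub_apply, sub_lie]
          abel
      _ = 0 := by rw [jac, hD0, h4'']; simp
end

section
/- Let L be a nilpotent Lie algebra over ℝ and Ω : L × L → L an alternating ℝ-bilinear map such that the deformed bracket [x,y]_Ω := [x,y] − Ω(x,y) makes the underlying module of L into a Lie algebra L_Ω. Let D¹ ⊆ L denote the ℝ-span of { [x,y] − Ω(x,y) : x, y ∈ L } (the derived ideal of L_Ω). If Ω(u, v) = 0 for all u, v ∈ D¹, then the deformed Lie algebra L_Ω is solvable. -/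
/-- The derived series of the deformed Lie algebra `L_Ω`, whose bracket is
`[x,y]_Ω = [x,y] - Ω(x,y)`. -/
def deformedDerivedSeries (L : Type*) [LieRing L] [LieAlgebra ℝ L]
    (Ω : L →ₗ[ℝ] L →ₗ[ℝ] L) : ℕ → Submodule ℝ L
  | 0 => ⊤
  | n + 1 => Submodule.span ℝ
      {z : L | ∃ x ∈ deformedDerivedSeries L Ω n, ∃ y ∈ deformedDerivedSeries L Ω n,
        z = ⁅x, y⁆ - Ω x y}

/-- Abstraction of the solvability argument in the proof of Theorem 3.4: if `L` is a
nilpotent real Lie algebra, the deformed bracket `[x,y]_Ω = [x,y] - Ω(x,y)` makes the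
underlying module into a Lie algebra `L_Ω`, and `Ω` vanishes on pairs from the derived
ideal `D¹ = span { [x,y] - Ω(x,y) }` of `L_Ω`, then `L_Ω` is solvable. -/
theorem deformed_algebra_solvable
    (L : Type*) [LieRing L] [LieAlgebra ℝ L] [LieRing.IsNilpotent L]
    (Ω : L →ₗ[ℝ] L →ₗ[ℝ] L)
    (halt : ∀ x : L, Ω x x = 0)
    (hLie : IsLieBracket L (fun x y => ⁅x, y⁆ - Ω x y))
    (hOmD1 : ∀ u ∈ Submodule.span ℝ {z : L | ∃ x y : L, z = ⁅x, y⁆ - Ω x y},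
             ∀ v ∈ Submodule.span ℝ {z : L | ∃ x y : L, z = ⁅x, y⁆ - Ω x y},
      Ω u v = 0) :
    ∃ n : ℕ, deformedDerivedSeries L Ω n = ⊥ := by
  -- The deformed derived series is antitone (for successive steps).
  have hmono : ∀ n : ℕ, deformedDerivedSeries L Ω (n + 1) ≤ deformedDerivedSeries L Ω n := by
    intro n
    induction n with
    | zero => exact le_top
    | succ n ih =>
      show Submodule.span ℝ _ ≤ Submodule.span ℝ _
      apply Submodule.span_mono
      rintro z ⟨x, hx, y, hy, rfl⟩
      exact ⟨x, ih hx, y, ih hy, rfl⟩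
  -- Every term of the series (after step 1) lies in D¹.
  have hD1 : ∀ n : ℕ, deformedDerivedSeries L Ω (n + 1) ≤
      Submodule.span ℝ {z : L | ∃ x y : L, z = ⁅x, y⁆ - Ω x y} := by
    intro n
    induction n with
    | zero =>
      apply Submodule.span_mono
      rintro z ⟨x, -, y, -, rfl⟩
      exact ⟨x, y, rfl⟩
    | succ n ih => exact le_trans (hmono (n + 1)) ih
  -- The deformed derived series is contained in the lower central series of L.
  have hlcs : ∀ n : ℕ, deformedDerivedSeries L Ω (n + 1) ≤
      (LieModule.lowerCentralSeries ℝ L L n : LieSubmodule ℝ L L).toSubmodule := by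
    intro n
    induction n with
    | zero => exact le_top
    | succ n ih =>
      show Submodule.span ℝ _ ≤ _
      apply Submodule.span_le.mpr
      rintro z ⟨x, hx, y, hy, rfl⟩
      have hΩ : Ω x y = 0 := hOmD1 x (hD1 n hx) y (hD1 n hy)
      have hy' : y ∈ LieModule.lowerCentralSeries ℝ L L n := ih hy
      have : ⁅x, y⁆ ∈ LieModule.lowerCentralSeries ℝ L L (n + 1) := by
        rw [LieModule.lowerCentralSeries_succ]
        exact LieSubmodule.lie_mem_lie (LieSubmodule.mem_top x) hy'
      simpa [hΩ] using this
  obtain ⟨k, hk⟩ := LieModule.IsNilpotent.nilpotent (R := ℝ) (L := L) (M := L)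
  refine ⟨k + 1, le_bot_iff.mp ?_⟩
  have := hlcs k
  rw [hk] at this
  exact this
end

section
/- Let V be a finite-dimensional real inner product space, let E, ξ ∈ V with ξ ≠ 0 and ⟨ξ, E⟩ > 0, and let S be a finite set of vectors of V. Set S₁ := { ν ∈ S : ⟨ν, E⟩ = 1 } and assume every element of S can be written as a sum ν₁ + ⋯ + ν_k with k ≥ 1 and each νᵢ ∈ S₁. Let c := E − (⟨ξ, E⟩ / ⟨ξ, ξ⟩) ξ (the orthogonal projection of E onto the hyperplane orthogonal to ξ). Then ⟨ν, c⟩ > 0 for every ν ∈ S if and only if ⟨ξ, ν⟩ < ⟨ξ, ξ⟩ / ⟨ξ, E⟩ for every ν ∈ S₁. -/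
open RealInnerProductSpace

lemma list_sum_inner_pos {V : Type*} [NormedAddCommGroup V] [InnerProductSpace ℝ V]
    (c : V) : ∀ l : List V, l ≠ [] → (∀ v ∈ l, 0 < ⟪v, c⟫) → 0 < ⟪l.sum, c⟫ := by
  intro l
  induction l with
  | nil => intro h; exact absurd rfl h
  | cons a t ih =>
    intro _ hpos
    rw [List.sum_cons, inner_add_left]
    rcases eq_or_ne t [] with rfl | ht
    · simpa using hpos a (by simp)
    · have := ih ht (fun v hv => hpos v (List.mem_cons_of_mem a hv))
      have ha := hpos a List.mem_cons_self
      linarith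

/-- Proposition 4.5: with `c` the orthogonal projection of `E` onto the hyperplane
orthogonal to `ξ`, and assuming every element of `S` is a (nonempty) sum of elements
of `S₁ = {ν ∈ S | ⟪ν, E⟫ = 1}`, one has `⟪ν, c⟫ > 0` for every `ν ∈ S` if and only if
`⟪ξ, ν⟫ < ⟪ξ, ξ⟫ / ⟪ξ, E⟫` for every `ν ∈ S₁`. -/
theorem projection_positive_iff
    (V : Type*) [NormedAddCommGroup V] [InnerProductSpace ℝ V]
    [FiniteDimensional ℝ V]
    (E ξ : V) (hξ : ξ ≠ 0) (hξE : 0 < ⟪ξ, E⟫)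
    (S : Set V) (hSfin : S.Finite)
    (hgen : ∀ ν ∈ S, ∃ l : List V, l ≠ [] ∧
      (∀ v ∈ l, v ∈ {ν' ∈ S | ⟪ν', E⟫ = (1 : ℝ)}) ∧ l.sum = ν) :
    (∀ ν ∈ S, 0 < ⟪ν, E - (⟪ξ, E⟫ / ⟪ξ, ξ⟫) • ξ⟫) ↔
      (∀ ν ∈ {ν' ∈ S | ⟪ν', E⟫ = (1 : ℝ)}, ⟪ξ, ν⟫ < ⟪ξ, ξ⟫ / ⟪ξ, E⟫) := by
  have hss : (0:ℝ) < ⟪ξ, ξ⟫ := lt_of_le_of_ne real_inner_self_nonneg (Ne.symm (inner_self_ne_zero.mpr hξ))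
  have hexp : ∀ ν : V, ⟪ν, E - (⟪ξ, E⟫ / ⟪ξ, ξ⟫) • ξ⟫
      = ⟪ν, E⟫ - (⟪ξ, E⟫ / ⟪ξ, ξ⟫) * ⟪ξ, ν⟫ := by
    intro ν
    rw [inner_sub_right, real_inner_smul_right, real_inner_comm ν ξ]
  have key : ∀ ν ∈ {ν' ∈ S | ⟪ν', E⟫ = (1 : ℝ)},
      (0 < ⟪ν, E - (⟪ξ, E⟫ / ⟪ξ, ξ⟫) • ξ⟫ ↔ ⟪ξ, ν⟫ < ⟪ξ, ξ⟫ / ⟪ξ, E⟫) := by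
    intro ν hν
    rw [hexp, hν.2]
    rw [div_mul_eq_mul_div, sub_pos, div_lt_one hss, lt_div_iff₀ hξE]
    constructor <;> intro h <;> nlinarith
  constructor
  · intro h ν hν
    exact (key ν hν).mp (h ν hν.1)
  · intro h ν hν
    obtain ⟨l, hl, hmem, hsum⟩ := hgen ν hν
    rw [← hsum]
    exact list_sum_inner_pos _ l hl fun v hv => (key v (hmem v hv)).mpr (h v (hmem v hv))
end

section
/- Let V be a real inner product space and let Φ ⊆ V ∖ {0} be a finite set such that: (i) for every α ∈ Φ, the reflection s_α(x) := x − 2(⟨x, α⟩/⟨α, α⟩)α maps Φ into Φ, and (ii) 2⟨β, α⟩/⟨α, α⟩ ∈ ℤ for all α, β ∈ Φ. If the linear span of Φ has dimension at least 3, then for every α ∈ Φ there exists β ∈ Φ with ⟨α, β⟩ = 0. -/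
open RealInnerProductSpace

/-- Strict Cauchy–Schwarz: if `y` is not in the span of `x ≠ 0`, then
`⟪x,y⟫² < ⟪x,x⟫⟪y,y⟫`. -/
private lemma cs_strict {V : Type*} [NormedAddCommGroup V] [InnerProductSpace ℝ V]
    {x y : V} (hx : x ≠ 0) (h : y ∉ Submodule.span ℝ ({x} : Set V)) :
    ⟪x, y⟫ * ⟪x, y⟫ < ⟪x, x⟫ * ⟪y, y⟫ := by
  rcases lt_or_eq_of_le (real_inner_mul_inner_self_le x y) with h' | h'
  · exact h'
  · exfalso
    apply h
    have hxx : ⟪x, x⟫ ≠ 0 := (inner_self_ne_zero (𝕜 := ℝ)).mpr hx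
    set z := ⟪x, x⟫ • y - ⟪x, y⟫ • x with hz
    have hzz : ⟪z, z⟫ = ⟪x, x⟫ * (⟪x, x⟫ * ⟪y, y⟫ - ⟪x, y⟫ * ⟪x, y⟫) := by
      simp only [hz, inner_sub_left, inner_sub_right, real_inner_smul_left,
        real_inner_smul_right, real_inner_comm x y]
      ring
    have hz0 : z = 0 := by
      rw [← inner_self_eq_zero (𝕜 := ℝ), hzz, ← h']
      ring
    have heq : ⟪x, x⟫ • y = ⟪x, y⟫ • x := by rwa [sub_eq_zero] at hz0
    rw [Submodule.mem_span_singleton]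
    refine ⟨⟪x, y⟫ / ⟪x, x⟫, ?_⟩
    have hy : ((⟪x, x⟫)⁻¹ * ⟪x, y⟫) • x = y := by
      have h5 := congrArg (fun v => (⟪x, x⟫)⁻¹ • v) heq
      simp only [smul_smul, inv_mul_cancel₀ hxx, one_smul] at h5
      exact h5.symm
    rw [div_eq_inv_mul]
    exact hy

/-- Claim used in the first case of the proof of Proposition 4.3: in a (possibly
non-reduced) crystallographic root system `Φ` whose span has dimension at least `3`,
every root `α ∈ Φ` admits a root `β ∈ Φ` orthogonal to it. -/
theorem exists_orthogonal_root
    (V : Type*) [NormedAddCommGroup V] [InnerProductSpace ℝ V]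
    (Φ : Set V) (hfin : Φ.Finite) (h0 : (0 : V) ∉ Φ)
    (hrefl : ∀ α ∈ Φ, ∀ β ∈ Φ, β - (2 * ⟪β, α⟫ / ⟪α, α⟫) • α ∈ Φ)
    (hcrys : ∀ α ∈ Φ, ∀ β ∈ Φ, ∃ n : ℤ, 2 * ⟪β, α⟫ / ⟪α, α⟫ = (n : ℝ))
    (hrank : 3 ≤ Module.finrank ℝ ↥(Submodule.span ℝ Φ)) :
    ∀ α ∈ Φ, ∃ β ∈ Φ, ⟪α, β⟫ = 0 := by
  intro α hα
  by_contra hcon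
  push_neg at hcon
  -- basic facts
  have hne : ∀ β ∈ Φ, β ≠ 0 := fun β hβ h => h0 (h ▸ hβ)
  have hpos : ∀ β ∈ Φ, (0 : ℝ) < ⟪β, β⟫ := fun β hβ =>
    lt_of_le_of_ne real_inner_self_nonneg
      (Ne.symm ((inner_self_ne_zero (𝕜 := ℝ)).mpr (hne β hβ)))
  -- integrality, denominators cleared
  have hint : ∀ γ ∈ Φ, ∀ β ∈ Φ, ∃ n : ℤ, 2 * ⟪β, γ⟫ = (n : ℝ) * ⟪γ, γ⟫ := by
    intro γ hγ β hβ
    obtain ⟨n, hn⟩ := hcrys γ hγ β hβ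
    refine ⟨n, ?_⟩
    have h' : ⟪γ, γ⟫ ≠ 0 := ne_of_gt (hpos γ hγ)
    field_simp at hn
    linarith
  -- reflections, denominators cleared
  have href : ∀ γ ∈ Φ, ∀ β ∈ Φ, ∀ n : ℤ, 2 * ⟪β, γ⟫ = (n : ℝ) * ⟪γ, γ⟫ →
      β - (n : ℝ) • γ ∈ Φ := by
    intro γ hγ β hβ n hn
    have h' : ⟪γ, γ⟫ ≠ 0 := ne_of_gt (hpos γ hγ)
    have h2 : 2 * ⟪β, γ⟫ / ⟪γ, γ⟫ = (n : ℝ) := by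
      rw [hn]; field_simp
    have := hrefl γ hγ β hβ
    rwa [h2] at this
  -- negation closure
  have hneg : ∀ β ∈ Φ, -β ∈ Φ := by
    intro β hβ
    have h2 : 2 * ⟪β, β⟫ = ((2 : ℤ) : ℝ) * ⟪β, β⟫ := by push_cast; ring
    have := href β hβ β hβ 2 h2
    have he : β - ((2 : ℤ) : ℝ) • β = -β := by push_cast; module
    rwa [he] at this
  set a := ⟪α, α⟫ with ha
  have ha0 : (0 : ℝ) < a := hpos α hα
  -- key lemma: every root off the line of α has the same length as α and
  -- inner product ±a/2 with α
  have key : ∀ β ∈ Φ, β ∉ Submodule.span ℝ ({α} : Set V) →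
      ⟪β, β⟫ = a ∧ (2 * ⟪α, β⟫ = a ∨ 2 * ⟪α, β⟫ = -a) := by
    intro β hβ hsp
    obtain ⟨n1, hn1⟩ := hint α hα β hβ
    obtain ⟨n2, hn2⟩ := hint β hβ α hα
    set b := ⟪β, β⟫ with hb
    have hb0 : (0 : ℝ) < b := hpos β hβ
    have hsym : ⟪β, α⟫ = ⟪α, β⟫ := real_inner_comm α β
    have hn1' : 2 * ⟪α, β⟫ = (n1 : ℝ) * a := by rw [← hsym]; exact hn1
    have hip : ⟪α, β⟫ ≠ 0 := hcon β hβ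
    have hcs : ⟪α, β⟫ * ⟪α, β⟫ < a * b := cs_strict (hne α hα) hsp
    -- bounds on n1 * n2
    have hprod : ((n1 * n2 : ℤ) : ℝ) * (a * b) = (2 * ⟪α, β⟫) * (2 * ⟪α, β⟫) := by
      push_cast
      linear_combination (-(2 * ⟪α, β⟫)) * hn1' + (-((n1 : ℝ) * a)) * hn2
    have hab : (0 : ℝ) < a * b := mul_pos ha0 hb0
    have h2ip : (0 : ℝ) < (2 * ⟪α, β⟫) * (2 * ⟪α, β⟫) :=
      mul_self_pos.mpr (mul_ne_zero two_ne_zero hip)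
    have hltR : ((n1 * n2 : ℤ) : ℝ) < 4 := by nlinarith [hprod, hcs, hab]
    have hgeR : (0 : ℝ) < ((n1 * n2 : ℤ) : ℝ) := by nlinarith [hprod, h2ip, hab]
    have hlt : n1 * n2 < 4 := by exact_mod_cast hltR
    have hge : 1 ≤ n1 * n2 := by
      have h' : (0 : ℤ) < n1 * n2 := by exact_mod_cast hgeR
      omega
    rcases (by omega : ∀ k : ℤ, 1 ≤ k → k < 4 → k = 1 ∨ k = 2 ∨ k = 3) _ hge hlt
      with hk | hk | hk
    · -- n1 n2 = 1 : the conclusion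
      have h11 : (n1 = 1 ∧ n2 = 1) ∨ (n1 = -1 ∧ n2 = -1) := by
        rcases Int.isUnit_iff.mp (IsUnit.of_mul_eq_one _ hk) with h | h
        · left
          refine ⟨h, ?_⟩
          have hk' := hk
          rw [h] at hk'
          omega
        · right
          refine ⟨h, ?_⟩
          have hk' := hk
          rw [h] at hk'
          omega
      rcases h11 with ⟨e1, e2⟩ | ⟨e1, e2⟩
      · subst e1; subst e2
        simp only [Int.cast_one, one_mul] at hn1' hn2
        constructor
        · linarith
        · left; linarith
      · subst e1; subst e2
        simp only [Int.cast_neg, Int.cast_one, neg_one_mul] at hn1' hn2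
        constructor
        · linarith
        · right; linarith
    · -- n1 n2 = 2 : s_β α is orthogonal to α, contradiction
      exfalso
      have hδ : α - (n2 : ℝ) • β ∈ Φ := href β hβ α hα n2 hn2
      apply hcon _ hδ
      have hkR : (n1 : ℝ) * n2 = 2 := by exact_mod_cast hk
      simp only [inner_sub_right, real_inner_smul_right]
      rw [← ha]
      linear_combination (-(n2 : ℝ) / 2) * hn1' - (a / 2) * hkR
    · -- n1 n2 = 3 : β + s_α β is orthogonal to α, contradiction
      exfalso
      have hβ' : β - (n1 : ℝ) • α ∈ Φ := href α hα β hβ n1 hn1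
      set β' := β - (n1 : ℝ) • α with hβ'def
      have hkR : (n1 : ℝ) * n2 = 3 := by exact_mod_cast hk
      have hE : (n1 : ℝ) * a = (n2 : ℝ) * b := by linarith
      have hb' : ⟪β', β'⟫ = b := by
        simp only [hβ'def, inner_sub_left, inner_sub_right, real_inner_smul_left,
          real_inner_smul_right, real_inner_comm α β, ← ha, ← hb]
        linear_combination (-(n1 : ℝ)) * hn1'
      have h2 : 2 * ⟪β, β'⟫ = ((-1 : ℤ) : ℝ) * ⟪β', β'⟫ := by
        rw [hb']
        simp only [hβ'def, inner_sub_right, real_inner_smul_right, ← hb]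
        push_cast
        linear_combination (-(n1 : ℝ)) * hn1' - b * hkR - (n1 : ℝ) * hE
          - (2 * (n1 : ℝ)) * hsym
      have hδ : β - ((-1 : ℤ) : ℝ) • β' ∈ Φ := href β' hβ' β hβ (-1) h2
      apply hcon _ hδ
      simp only [hβ'def, Int.cast_neg, Int.cast_one, neg_smul, one_smul, sub_neg_eq_add,
        inner_add_right, inner_sub_right, real_inner_smul_right, ← ha]
      linarith
  -- produce β off the line of α
  haveI : FiniteDimensional ℝ ↥(Submodule.span ℝ ({α} : Set V)) :=
    FiniteDimensional.span_of_finite ℝ (Set.finite_singleton α)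
  have hβex : ∃ β ∈ Φ, β ∉ Submodule.span ℝ ({α} : Set V) := by
    by_contra h
    push_neg at h
    have hle : Submodule.span ℝ Φ ≤ Submodule.span ℝ ({α} : Set V) :=
      Submodule.span_le.mpr h
    have h1 : Module.finrank ℝ ↥(Submodule.span ℝ Φ) ≤
        Module.finrank ℝ ↥(Submodule.span ℝ ({α} : Set V)) :=
      Submodule.finrank_mono hle
    have h2 : Module.finrank ℝ ↥(Submodule.span ℝ ({α} : Set V)) ≤ 1 :=
      le_of_eq (finrank_span_singleton (hne α hα))
    omega
  obtain ⟨β₀, hβ₀, hβ₀sp⟩ := hβex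
  -- sign-normalize β
  have hβex' : ∃ β ∈ Φ, β ∉ Submodule.span ℝ ({α} : Set V) ∧ 2 * ⟪α, β⟫ = a := by
    obtain ⟨hb, h1 | h1⟩ := key β₀ hβ₀ hβ₀sp
    · exact ⟨β₀, hβ₀, hβ₀sp, h1⟩
    · refine ⟨-β₀, hneg β₀ hβ₀, ?_, ?_⟩
      · intro h
        exact hβ₀sp (by simpa using Submodule.neg_mem _ h)
      · rw [inner_neg_right]; linarith
  obtain ⟨β, hβ, hβsp, hβa⟩ := hβex'
  have hββ : ⟪β, β⟫ = a := (key β hβ hβsp).1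
  -- produce γ off the plane of α, β
  haveI : FiniteDimensional ℝ ↥(Submodule.span ℝ ({α, β} : Set V)) :=
    FiniteDimensional.span_of_finite ℝ ((Set.finite_singleton β).insert α)
  have hγex : ∃ γ ∈ Φ, γ ∉ Submodule.span ℝ ({α, β} : Set V) := by
    by_contra h
    push_neg at h
    have hle : Submodule.span ℝ Φ ≤ Submodule.span ℝ ({α, β} : Set V) :=
      Submodule.span_le.mpr h
    have h1 : Module.finrank ℝ ↥(Submodule.span ℝ Φ) ≤
        Module.finrank ℝ ↥(Submodule.span ℝ ({α, β} : Set V)) :=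
      Submodule.finrank_mono hle
    have h2 : Module.finrank ℝ ↥(Submodule.span ℝ ({α, β} : Set V)) ≤ 2 := by
      classical
      have : ({α, β} : Set V) = (({α, β} : Finset V) : Set V) := by simp
      rw [this]
      refine le_trans (finrank_span_finset_le_card _) ?_
      exact le_trans (Finset.card_insert_le _ _) (by simp)
    omega
  obtain ⟨γ₀, hγ₀, hγ₀sp⟩ := hγex
  -- sign-normalize γ
  have hspan_mono : Submodule.span ℝ ({α} : Set V) ≤ Submodule.span ℝ ({α, β} : Set V) :=
    Submodule.span_mono (by simp)
  have hγex' : ∃ γ ∈ Φ, γ ∉ Submodule.span ℝ ({α, β} : Set V) ∧ 2 * ⟪α, γ⟫ = a := by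
    have hγ₀sp1 : γ₀ ∉ Submodule.span ℝ ({α} : Set V) := fun h => hγ₀sp (hspan_mono h)
    obtain ⟨hc, h1 | h1⟩ := key γ₀ hγ₀ hγ₀sp1
    · exact ⟨γ₀, hγ₀, hγ₀sp, h1⟩
    · refine ⟨-γ₀, hneg γ₀ hγ₀, ?_, ?_⟩
      · intro h
        exact hγ₀sp (by simpa using Submodule.neg_mem _ h)
      · rw [inner_neg_right]; linarith
  obtain ⟨γ, hγ, hγsp, hγa⟩ := hγex'
  have hγsp1 : γ ∉ Submodule.span ℝ ({α} : Set V) := fun h => hγsp (hspan_mono h)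
  have hγγ : ⟪γ, γ⟫ = a := (key γ hγ hγsp1).1
  -- the integer m with 2⟪β,γ⟫ = m a
  obtain ⟨m, hm0⟩ := hint γ hγ β hβ
  have hm : 2 * ⟪β, γ⟫ = (m : ℝ) * a := by rw [hm0, hγγ]
  -- β is not a multiple of γ
  have hβsγ : β ∉ Submodule.span ℝ ({γ} : Set V) := by
    intro h
    rw [Submodule.mem_span_singleton] at h
    obtain ⟨c, hc⟩ := h
    have hc0 : c ≠ 0 := by
      rintro rfl
      simp only [zero_smul] at hc
      exact hne β hβ hc.symm
    apply hγsp
    rw [Submodule.mem_span_pair]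
    refine ⟨0, c⁻¹, ?_⟩
    rw [← hc, smul_smul, inv_mul_cancel₀ hc0, one_smul, zero_smul, zero_add]
  have hcs : ⟪γ, β⟫ * ⟪γ, β⟫ < a * a := by
    have := cs_strict (hne γ hγ) hβsγ
    rwa [hγγ, hββ] at this
  have hsymβγ : ⟪β, γ⟫ = ⟪γ, β⟫ := real_inner_comm γ β
  -- m ∈ {-1, 0, 1}
  have hm2 : m = -1 ∨ m = 0 ∨ m = 1 := by
    have hq : ((m : ℝ) * a) * ((m : ℝ) * a) = 4 * (⟪γ, β⟫ * ⟪γ, β⟫) := by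
      linear_combination (-(2 * ⟪β, γ⟫ + (m : ℝ) * a)) * hm
        + (4 * (⟪β, γ⟫ + ⟪γ, β⟫)) * hsymβγ
    have h1 : ((m : ℝ) * m) * (a * a) < 4 * (a * a) := by nlinarith [hq, hcs]
    have h2 : (m : ℝ) * m < 4 :=
      lt_of_mul_lt_mul_right h1 (le_of_lt (mul_pos ha0 ha0))
    have h3 : m * m < 4 := by exact_mod_cast h2
    have h4 : -1 ≤ m ∧ m ≤ 1 := by
      constructor <;> nlinarith [h3]
    omega
  rcases hm2 with rfl | rfl | rfl
  · -- ⟪β,γ⟫ = -a/2 : β + γ ∈ Φ contradicts key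
    have hδ : β - ((-1 : ℤ) : ℝ) • γ ∈ Φ := href γ hγ β hβ (-1) (by rw [hm0, hγγ])
    set δ := β - ((-1 : ℤ) : ℝ) • γ with hδdef
    have hδsp : δ ∉ Submodule.span ℝ ({α} : Set V) := by
      intro h
      rw [Submodule.mem_span_singleton] at h
      obtain ⟨c, hc⟩ := h
      apply hγsp
      rw [Submodule.mem_span_pair]
      refine ⟨c, -1, ?_⟩
      have : δ = β + γ := by rw [hδdef]; push_cast; module
      rw [← hc] at this
      -- c • α = β + γ, so γ = c • α - β
      rw [neg_one_smul]
      linear_combination (norm := module) this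
    obtain ⟨_, h1 | h1⟩ := key δ hδ hδsp <;>
    · rw [hδdef] at h1
      simp only [inner_sub_right, real_inner_smul_right, Int.cast_neg, Int.cast_one] at h1
      linarith
  · -- ⟪β,γ⟫ = 0 : replace γ by α - γ and conclude
    simp only [Int.cast_zero, zero_mul] at hm
    have hγ'mem : α - ((1 : ℤ) : ℝ) • γ ∈ Φ := by
      refine href γ hγ α hα 1 ?_
      rw [hγγ]; push_cast; linarith
    set γ' := α - ((1 : ℤ) : ℝ) • γ with hγ'def
    have hγ'γ' : ⟪γ', γ'⟫ = a := by
      simp only [hγ'def, Int.cast_one, one_smul, inner_sub_left, inner_sub_right,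
        real_inner_comm α γ, ← ha]
      rw [hγγ]
      linarith
    have hβγ' : 2 * ⟪β, γ'⟫ = ((1 : ℤ) : ℝ) * ⟪γ', γ'⟫ := by
      rw [hγ'γ']
      simp only [hγ'def, Int.cast_one, one_smul, inner_sub_right]
      rw [real_inner_comm α β]
      linarith
    have hδ : β - ((1 : ℤ) : ℝ) • γ' ∈ Φ := href γ' hγ'mem β hβ 1 hβγ'
    apply hcon _ hδ
    simp only [hγ'def, Int.cast_one, one_smul, inner_sub_right, ← ha]
    linarith
  · -- ⟪β,γ⟫ = a/2 : β - γ is orthogonal to α, contradiction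
    have hδ : β - ((1 : ℤ) : ℝ) • γ ∈ Φ := href γ hγ β hβ 1 (by rw [hm0, hγγ])
    apply hcon _ hδ
    simp only [Int.cast_one, one_smul, inner_sub_right]
    linarith
end
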